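/- Let p be real with 0 < p < 1/8. Then the sequence D_n(p) (equivalently, the reconstruction accuracy RA_F(T_n) = 1/2 + D_n(p)/2) does not converge as n → ∞; i.e., there is no real L such that D_n(p) → L. -/
import Mathlib


open Filter

set_option maxHeartbeats 1000000 in
/-- For 0 < p < 1/8, the sequence D_n (and hence the accuracy 1/2 + D_n/2)
diverges: it has no limit. -/
theorem fitch_D_diverges
    (p : ℝ) (C D : ℕ → ℝ)
    (hC0 : C 0 = 0) (hD0 : D 0 = 1)
    (hC : ∀ n, 2 * C (n + 1) =
        1 - 2 * C n + 3 * (C n) ^ 2 - (2 * p - 1) ^ 2 * (D n) ^ 2)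
    (hD : ∀ n, D (n + 1) = (2 * p - 1) * (1 + C n) * D n)
    (hp1 : 0 < p) (hp2 : p < 1 / 8) :
    ¬ ∃ L : ℝ, Tendsto D atTop (nhds L) := by
  rintro ⟨L, hL⟩
  have hxneg : 2 * p - 1 < 0 := by linarith
  have hxgt : -1 < 2 * p - 1 := by linarith
  -- invariant region: 0 ≤ C n and C n + |D n| ≤ 1
  have inv : ∀ n, 0 ≤ C n ∧ C n + |D n| ≤ 1 := by
    intro n
    induction n with
    | zero => simp [hC0, hD0]
    | succ n ih =>
      obtain ⟨h1, h2⟩ := ih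
      have hd0 : (0:ℝ) ≤ |D n| := abs_nonneg _
      have hd : |D n| ≤ 1 - C n := by linarith
      have hD2 : (D n) ^ 2 ≤ (1 - C n) ^ 2 := by
        rw [← sq_abs]
        nlinarith
      have hxsq : (2 * p - 1) ^ 2 ≤ 1 := by nlinarith
      have hxd : (2 * p - 1) ^ 2 * (D n) ^ 2 ≤ (D n) ^ 2 := by
        nlinarith [sq_nonneg (D n)]
      have habs : |D (n+1)| = (1 - 2*p) * (1 + C n) * |D n| := by
        rw [hD n, abs_mul, abs_mul, abs_of_neg hxneg,
          abs_of_pos (by linarith : (0:ℝ) < 1 + C n)]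
        ring
      constructor
      · nlinarith [hC n, sq_nonneg (C n)]
      · rw [habs]
        have hCn := hC n
        have hDsq : (D n) ^ 2 = |D n| ^ 2 := (sq_abs _).symm
        have key1 : (0:ℝ) ≤ (1 - C n - |D n|) * (1 + 3 * C n - |D n|) :=
          mul_nonneg (by linarith) (by linarith)
        have hdle1 : |D n| ≤ 1 := by linarith
        have key2 : (0:ℝ) ≤ (1 - (1 - 2*p)) *
            ((1 + C n) * |D n| - (1 + (1 - 2*p)) * |D n| ^ 2 / 2) := by
          apply mul_nonneg (by linarith)
          nlinarith [sq_nonneg (|D n|)]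
        nlinarith [key1, key2]
  have hDne : ∀ n, D n ≠ 0 := by
    intro n
    induction n with
    | zero => rw [hD0]; norm_num
    | succ n ih =>
      rw [hD n]
      have h1 := (inv n).1
      have : (2 * p - 1) * (1 + C n) ≠ 0 := by
        apply mul_ne_zero (by linarith) (by linarith)
      exact mul_ne_zero this ih
  have hDsqpos : ∀ n, 0 < (D n) ^ 2 := fun n =>
    lt_of_le_of_ne (sq_nonneg _) (Ne.symm (pow_ne_zero 2 (hDne n)))
  have hsign : ∀ n, D (n+1) * D n < 0 := by
    intro n
    rw [hD n]
    have h1 := (inv n).1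
    have h2 := hDsqpos n
    have h3 : 0 < (1 + C n) * (D n) ^ 2 := mul_pos (by linarith) h2
    have h4 : (2*p-1) * (1 + C n) * D n * D n = (2*p-1) * ((1 + C n) * (D n)^2) := by
      ring
    rw [h4]
    exact mul_neg_of_neg_of_pos hxneg h3
  -- step 1: the limit must be 0
  have hL2 : Tendsto (fun n => D (n+1) * D n) atTop (nhds (L * L)) :=
    (hL.comp (tendsto_add_atTop_nat 1)).mul hL
  have hLle : L * L ≤ 0 :=
    le_of_tendsto hL2 (Eventually.of_forall fun n => (hsign n).le)
  have hL0 : L = 0 := by nlinarith [mul_self_nonneg L]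
  subst hL0
  -- step 2: D → 0 is impossible
  have hDsq0 : Tendsto (fun n => D n * D n) atTop (nhds 0) := by
    simpa using hL.mul hL
  obtain ⟨ε, hεdef⟩ : ∃ ε : ℝ, ε = 4 * (1 - 2*p) / 3 - 1 := ⟨_, rfl⟩
  have hε : 0 < ε := by rw [hεdef]; linarith
  have hev : ∀ᶠ n in atTop, D n * D n < ε := hDsq0.eventually (gt_mem_nhds hε)
  rw [eventually_atTop] at hev
  obtain ⟨N, hN⟩ := hev
  have hCge : ∀ n, N ≤ n → 1/3 - ε/2 ≤ C (n+1) := by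
    intro n hn
    have h1 := hC n
    have h2 := hN n hn
    have hDD : (D n) ^ 2 < ε := by rw [pow_two]; exact h2
    have hxsq : (2 * p - 1) ^ 2 ≤ 1 := by nlinarith
    have hxd : (2 * p - 1) ^ 2 * (D n) ^ 2 ≤ (D n) ^ 2 := by
      nlinarith [sq_nonneg (D n)]
    linarith [sq_nonneg (3 * C n - 1)]
  have habsD : ∀ k, |D (k+1)| = (1 - 2*p) * (1 + C k) * |D k| := by
    intro k
    rw [hD k, abs_mul, abs_mul, abs_of_neg hxneg,
      abs_of_pos (by linarith [(inv k).1] : (0:ℝ) < 1 + C k)]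
    ring
  have hmono : ∀ n, N + 1 ≤ n → |D n| ≤ |D (n+1)| := by
    intro n hn
    obtain ⟨m, rfl⟩ : ∃ m, n = m + 1 := ⟨n - 1, by omega⟩
    have hm : N ≤ m := by omega
    rw [habsD (m+1)]
    have hCb := hCge m hm
    have hCb' : 5/6 - 2*(1 - 2*p)/3 ≤ C (m+1) := by
      rw [hεdef] at hCb; linarith
    have hu : (0:ℝ) < 1 - 2*p := by linarith
    have key : 1 ≤ (1 - 2*p) * (1 + C (m+1)) := by
      have e1 : (1 - 2*p) * (5/6 - 2*(1 - 2*p)/3) ≤ (1 - 2*p) * C (m+1) :=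
        mul_le_mul_of_nonneg_left hCb' hu.le
      have e2 : (0:ℝ) ≤ ((1 - 2*p) - 3/4) * (2 - (1 - 2*p)) :=
        mul_nonneg (by linarith) (by linarith)
      nlinarith [e1, e2]
    have e3 : 1 * |D (m+1)| ≤ (1 - 2*p) * (1 + C (m+1)) * |D (m+1)| :=
      mul_le_mul_of_nonneg_right key (abs_nonneg (D (m+1)))
    linarith [e3]
  have hge : ∀ n, N + 1 ≤ n → |D (N+1)| ≤ |D n| := by
    intro n hn
    induction n, hn using Nat.le_induction with
    | base => exact le_rfl
    | succ n hn ih => exact le_trans ih (hmono n hn)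
  have hpos : 0 < |D (N+1)| := abs_pos.mpr (hDne (N+1))
  have habs0 : Tendsto (fun n => |D n|) atTop (nhds 0) := by
    simpa using hL.abs
  have : |D (N+1)| ≤ 0 :=
    ge_of_tendsto habs0 (eventually_atTop.2 ⟨N+1, hge⟩)
  linarith
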